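/- Let p be a prime and n a natural number. Then the Möbius number of the elementary abelian group C_p^n (the direct product of n copies of the cyclic group of order p) is μ(C_p^n) = (-1)^n · p^{C(n,2)}, where C(n,2) is the binomial coefficient n choose 2. -/

import Mathlib

open Finset

set_option linter.unusedSectionVars false
set_option maxHeartbeats 1000000

section Aux
open IncidenceAlgebra

/-- Transporting the Möbius function along an order embedding whose image is the
whole interval. -/
lemma mu_orderEmbedding_aux {α β : Type*} [PartialOrder α] [PartialOrder β]
    [LocallyFiniteOrder α] [LocallyFiniteOrder β] [DecidableEq α] [DecidableEq β]
    (e : α ↪o β) (a : α) :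
    ∀ N b, (Finset.Icc a b).card ≤ N →
      (∀ c, e a ≤ c → c ≤ e b → ∃ x, e x = c) →
      mu ℤ (e a) (e b) = mu ℤ a b := by
  have hz : ∀ b : α, ¬ a ≤ b → mu ℤ (e a) (e b) = mu ℤ a b := by
    intro b hab
    rw [apply_eq_zero_of_not_le hab, apply_eq_zero_of_not_le (fun h => hab (e.le_iff_le.1 h))]
  intro N
  induction N with
  | zero =>
    intro b hb _
    refine hz b fun h => ?_
    have h1 : a ∈ Finset.Icc a b := Finset.mem_Icc.2 ⟨le_rfl, h⟩
    have := Finset.card_pos.2 ⟨a, h1⟩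
    omega
  | succ N ih =>
    intro b hb hsurj
    by_cases hab : a ≤ b
    · rcases eq_or_lt_of_le hab with rfl | hlt
      · simp
      · have hne : a ≠ b := ne_of_lt hlt
        have hne' : e a ≠ e b := fun h => hne (e.injective h)
        rw [mu_eq_neg_sum_Ico_of_ne hne', mu_eq_neg_sum_Ico_of_ne hne]
        congr 1
        have himg : Finset.Ico (e a) (e b) = (Finset.Ico a b).map e.toEmbedding := by
          ext c
          simp only [Finset.mem_map, Finset.mem_Ico]
          constructor
          · rintro ⟨h1, h2⟩
            obtain ⟨x, rfl⟩ := hsurj c h1 h2.le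
            exact ⟨x, ⟨e.le_iff_le.1 h1, e.lt_iff_lt.1 h2⟩, rfl⟩
          · rintro ⟨x, ⟨h1, h2⟩, rfl⟩
            exact ⟨e.le_iff_le.2 h1, e.lt_iff_lt.2 h2⟩
        rw [himg, Finset.sum_map]
        refine Finset.sum_congr rfl fun x hx => ?_
        rw [Finset.mem_Ico] at hx
        have hsub : Finset.Icc a x ⊆ Finset.Icc a b := by
          intro y hy
          rw [Finset.mem_Icc] at hy ⊢
          exact ⟨hy.1, hy.2.trans hx.2.le⟩
        have hlt2 : (Finset.Icc a x).card < (Finset.Icc a b).card := by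
          refine Finset.card_lt_card (Finset.ssubset_iff_of_subset hsub |>.2 ?_)
          exact ⟨b, Finset.mem_Icc.2 ⟨hab, le_rfl⟩, fun hmem => LE.le.not_gt (Finset.mem_Icc.1 hmem).2 hx.2⟩
        exact ih x (by omega) (fun c h1 h2 => hsurj c h1 (h2.trans (e.le_iff_le.2 hx.2.le)))
    · exact hz b hab

lemma mu_orderIso {α β : Type*} [PartialOrder α] [PartialOrder β]
    [LocallyFiniteOrder α] [LocallyFiniteOrder β] [DecidableEq α] [DecidableEq β]
    (e : α ≃o β) (a b : α) :
    mu ℤ a b = mu ℤ (e a) (e b) :=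
  (mu_orderEmbedding_aux e.toOrderEmbedding a (Finset.Icc a b).card b le_rfl
    (fun c _ _ => ⟨e.symm c, e.apply_symm_apply c⟩)).symm

lemma weisner_aux {α : Type*} [Lattice α] [BoundedOrder α] [Fintype α] [DecidableEq α]
    [LocallyFiniteOrder α] (a : α) (ha : a ≠ ⊥) :
    ∀ N (y : α), a ≤ y → (Finset.Icc a y).card ≤ N →
      ∑ x ∈ Finset.univ.filter (fun x => x ⊔ a = y), mu ℤ ⊥ x = 0 := by
  intro N
  induction N with
  | zero =>
    intro y hay hc
    exfalso
    have h1 : a ∈ Finset.Icc a y := Finset.mem_Icc.2 ⟨le_rfl, hay⟩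
    have := Finset.card_pos.2 ⟨a, h1⟩
    omega
  | succ N ih =>
    intro y hay hc
    have key : ∑ y' ∈ Finset.Icc a y,
        ∑ x ∈ Finset.univ.filter (fun x => x ⊔ a = y'), mu ℤ ⊥ x = 0 := by
      rw [Finset.sum_fiberwise_eq_sum_filter Finset.univ (Finset.Icc a y) (fun x => x ⊔ a) (mu ℤ ⊥)]
      have hset : Finset.univ.filter (fun x => x ⊔ a ∈ Finset.Icc a y) = Finset.Icc ⊥ y := by
        ext x
        simp only [Finset.mem_filter, Finset.mem_univ, true_and, Finset.mem_Icc, bot_le,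
          le_sup_right, sup_le_iff]
        tauto
      rw [hset, sum_Icc_mu_right]
      have : (⊥ : α) ≠ y := fun h => ha (le_antisymm (h ▸ hay) bot_le)
      simp [this]
    have hymem : y ∈ Finset.Icc a y := Finset.mem_Icc.2 ⟨hay, le_rfl⟩
    rw [← Finset.sum_erase_add _ _ hymem] at key
    have hz : ∑ y' ∈ (Finset.Icc a y).erase y,
        ∑ x ∈ Finset.univ.filter (fun x => x ⊔ a = y'), mu ℤ ⊥ x = 0 := by
      refine Finset.sum_eq_zero fun y' hy' => ?_
      rw [Finset.mem_erase, Finset.mem_Icc] at hy'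
      have hsub : Finset.Icc a y' ⊆ Finset.Icc a y := by
        intro z hz
        rw [Finset.mem_Icc] at hz ⊢
        exact ⟨hz.1, hz.2.trans hy'.2.2⟩
      have hlt2 : (Finset.Icc a y').card < (Finset.Icc a y).card := by
        refine Finset.card_lt_card (Finset.ssubset_iff_of_subset hsub |>.2 ?_)
        exact ⟨y, hymem, fun hmem => hy'.1 (le_antisymm hy'.2.2 (Finset.mem_Icc.1 hmem).2)⟩
      exact ih y' hy'.2.1 (by omega)
    rw [hz, zero_add] at key
    exact key

lemma weisner {α : Type*} [Lattice α] [BoundedOrder α] [Fintype α] [DecidableEq α]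
    [LocallyFiniteOrder α] (a : α) (ha : a ≠ ⊥) :
    ∑ x ∈ Finset.univ.filter (fun x => x ⊔ a = ⊤), mu ℤ ⊥ x = 0 :=
  weisner_aux a ha (Finset.Icc a ⊤).card ⊤ le_top le_rfl

end Aux

section ElemAb
open IncidenceAlgebra

variable {p : ℕ} [Fact p.Prime] {n : ℕ}

/-- The linear functional on `(ZMod p)^n` with coefficients `c`. -/
noncomputable def fc (p n : ℕ) (c : Fin n → ZMod p) : (Fin n → ZMod p) →ₗ[ZMod p] ZMod p :=
  ∑ i, c i • LinearMap.proj i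

lemma fc_apply (c v : Fin n → ZMod p) : fc p n c v = ∑ i, c i * v i := by
  simp [fc, LinearMap.sum_apply, LinearMap.smul_apply, LinearMap.proj_apply, smul_eq_mul]

lemma fc_single (c : Fin n → ZMod p) (j : Fin n) : fc p n c (Pi.single j 1) = c j := by
  rw [fc_apply, Finset.sum_eq_single j]
  · simp
  · intro i _ hij; simp [Pi.single_apply, hij]
  · simp

/-- The distinguished nonzero vector. -/
noncomputable def e0 (p n : ℕ) : Fin (n + 1) → ZMod p := Pi.single 0 1

/-- The distinguished line. -/
noncomputable def aline (p n : ℕ) : Submodule (ZMod p) (Fin (n + 1) → ZMod p) :=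
  Submodule.span (ZMod p) {e0 p n}

lemma e0_ne_zero : e0 p n ≠ 0 := by
  haveI : Fact (1 < p) := ⟨(Fact.out : p.Prime).one_lt⟩
  intro h
  have := congrFun h 0
  simp [e0] at this

lemma fc_e0 (c : Fin (n+1) → ZMod p) : fc p (n+1) c (e0 p n) = c 0 := fc_single c 0

lemma mem_ker_aux (c : Fin (n+1) → ZMod p) (hc : c 0 = 1) (v : Fin (n+1) → ZMod p) :
    v - fc p (n+1) c v • e0 p n ∈ LinearMap.ker (fc p (n+1) c) := by
  rw [LinearMap.mem_ker, map_sub, map_smul, fc_e0, hc, smul_eq_mul, mul_one, sub_self]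

lemma ker_fc_sup (c : Fin (n+1) → ZMod p) (hc : c 0 = 1) :
    LinearMap.ker (fc p (n+1) c) ⊔ aline p n = ⊤ := by
  rw [eq_top_iff]
  intro v _
  rw [Submodule.mem_sup]
  exact ⟨v - fc p (n+1) c v • e0 p n, mem_ker_aux c hc v,
    fc p (n+1) c v • e0 p n,
    Submodule.smul_mem _ _ (Submodule.mem_span_singleton_self _), by abel⟩

lemma ker_fc_ne_top (c : Fin (n+1) → ZMod p) (hc : c 0 = 1) :
    LinearMap.ker (fc p (n+1) c) ≠ ⊤ := by
  haveI : Fact (1 < p) := ⟨(Fact.out : p.Prime).one_lt⟩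
  intro h
  have : e0 p n ∈ LinearMap.ker (fc p (n+1) c) := h ▸ Submodule.mem_top
  rw [LinearMap.mem_ker, fc_e0, hc] at this
  exact one_ne_zero this

lemma fc_inj (c c' : Fin (n+1) → ZMod p) (hc : c 0 = 1) (hc' : c' 0 = 1)
    (h : LinearMap.ker (fc p (n+1) c) = LinearMap.ker (fc p (n+1) c')) : c = c' := by
  have key : ∀ v, fc p (n+1) c' v = fc p (n+1) c v := by
    intro v
    have h1 := mem_ker_aux c hc v
    rw [h, LinearMap.mem_ker, map_sub, map_smul, fc_e0, hc', smul_eq_mul, mul_one,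
      sub_eq_zero] at h1
    exact h1
  funext i
  rw [← fc_single c i, ← fc_single c' i, key]

lemma e0_not_mem {x : Submodule (ZMod p) (Fin (n+1) → ZMod p)}
    (hx1 : x ⊔ aline p n = ⊤) (hx2 : x ≠ ⊤) : e0 p n ∉ x := by
  intro h
  have ha : aline p n ≤ x := by
    rw [aline, Submodule.span_le, Set.singleton_subset_iff]; exact h
  exact hx2 (by rw [← hx1, sup_eq_left.2 ha])

lemma isCompl_of_mem {x : Submodule (ZMod p) (Fin (n+1) → ZMod p)}
    (hx1 : x ⊔ aline p n = ⊤) (hx2 : x ≠ ⊤) : IsCompl x (aline p n) := by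
  have he0 := e0_not_mem hx1 hx2
  constructor
  · rw [disjoint_iff, eq_bot_iff]
    rintro v ⟨hvx, hva⟩
    rw [aline, SetLike.mem_coe, Submodule.mem_span_singleton] at hva
    obtain ⟨r, rfl⟩ := hva
    rcases eq_or_ne r 0 with rfl | hr
    · simp
    · exact absurd (by simpa [hr] using x.smul_mem r⁻¹ hvx) he0
  · rw [codisjoint_iff]; exact hx1

lemma surj_aux {x : Submodule (ZMod p) (Fin (n+1) → ZMod p)}
    (hx1 : x ⊔ aline p n = ⊤) (hx2 : x ≠ ⊤) :
    ∃ c : Fin (n+1) → ZMod p, c 0 = 1 ∧ LinearMap.ker (fc p (n+1) c) = x := by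
  have hcompl := (isCompl_of_mem hx1 hx2).symm
  set π := Submodule.linearProjOfIsCompl _ _ hcompl with hπ
  set t : (Fin (n+1) → ZMod p) →ₗ[ZMod p] ZMod p :=
    (LinearMap.proj 0).comp ((aline p n).subtype.comp π) with ht
  have he0a : e0 p n ∈ aline p n := Submodule.mem_span_singleton_self _
  have hte0 : t (e0 p n) = 1 := by
    have : π (e0 p n) = ⟨e0 p n, he0a⟩ :=
      Submodule.linearProjOfIsCompl_apply_left hcompl ⟨e0 p n, he0a⟩
    simp only [ht, LinearMap.comp_apply, this, Submodule.subtype_apply, LinearMap.proj_apply]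
    simp [e0]
  have hker : LinearMap.ker t = x := by
    ext v
    constructor
    · intro hv
      rw [LinearMap.mem_ker] at hv
      obtain ⟨r, hr⟩ := Submodule.mem_span_singleton.1 ((π v).2 :
        (π v : Fin (n+1) → ZMod p) ∈ aline p n)
      have : t v = r := by
        simp only [ht, LinearMap.comp_apply, Submodule.subtype_apply, LinearMap.proj_apply]
        rw [← hr]
        simp [e0]
      rw [hv] at this
      have hπv : π v = 0 := by
        apply Subtype.ext
        simp only [ZeroMemClass.coe_zero, ← hr, ← this]
        simp
      have := Submodule.linearProjOfIsCompl_ker hcompl ▸ (LinearMap.mem_ker.2 hπv)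
      exact this
    · intro hv
      rw [LinearMap.mem_ker, ht]
      simp only [LinearMap.comp_apply, Submodule.subtype_apply]
      rw [show π v = 0 from Submodule.projectionOnto_apply_right hcompl ⟨v, hv⟩]
      simp
  refine ⟨fun i => t (Pi.single i 1), by show t (Pi.single 0 1) = 1; exact hte0, ?_⟩
  have hfc : fc p (n+1) (fun i => t (Pi.single i 1)) = t := by
    apply LinearMap.ext
    intro v
    rw [fc_apply, LinearMap.pi_apply_eq_sum_univ t v]
    refine Finset.sum_congr rfl fun i _ => ?_
    rw [smul_eq_mul, mul_comm]
    congr 1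
    congr 1
    funext j
    simp [Pi.single_apply, eq_comm]
  rw [hfc, hker]

lemma finrank_of_mem {x : Submodule (ZMod p) (Fin (n+1) → ZMod p)}
    (hx1 : x ⊔ aline p n = ⊤) (hx2 : x ≠ ⊤) :
    Module.finrank (ZMod p) x = n := by
  have hinf : x ⊓ aline p n = ⊥ := disjoint_iff.1 (isCompl_of_mem hx1 hx2).1
  have h := Submodule.finrank_sup_add_finrank_inf_eq x (aline p n)
  rw [hx1, hinf, finrank_top, finrank_bot, Module.finrank_fin_fun,
    show Module.finrank (ZMod p) (aline p n) = 1 from finrank_span_singleton e0_ne_zero] at h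
  omega

lemma mu_bot_of_mem
    [Fintype (Submodule (ZMod p) (Fin (n+1) → ZMod p))]
    [DecidableEq (Submodule (ZMod p) (Fin (n+1) → ZMod p))]
    [LocallyFiniteOrder (Submodule (ZMod p) (Fin (n+1) → ZMod p))]
    [Fintype (Submodule (ZMod p) (Fin n → ZMod p))]
    [DecidableEq (Submodule (ZMod p) (Fin n → ZMod p))]
    [LocallyFiniteOrder (Submodule (ZMod p) (Fin n → ZMod p))]
    {x : Submodule (ZMod p) (Fin (n+1) → ZMod p)}
    (hx1 : x ⊔ aline p n = ⊤) (hx2 : x ≠ ⊤) :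
    mu ℤ (⊥ : Submodule (ZMod p) (Fin (n+1) → ZMod p)) x
      = mu ℤ (⊥ : Submodule (ZMod p) (Fin n → ZMod p)) ⊤ := by
  have hfr := finrank_of_mem hx1 hx2
  have f : (Fin n → ZMod p) ≃ₗ[ZMod p] x :=
    LinearEquiv.ofFinrankEq _ _ (by rw [Module.finrank_fin_fun, hfr])
  let E : Submodule (ZMod p) (Fin n → ZMod p) ↪o Submodule (ZMod p) (Fin (n+1) → ZMod p) :=
    (Submodule.orderIsoMapComap f).toOrderEmbedding.trans (Submodule.MapSubtype.orderEmbedding x)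
  have hbot : E ⊥ = ⊥ := by
    show Submodule.MapSubtype.orderEmbedding x ((Submodule.orderIsoMapComap f) ⊥) = ⊥
    rw [OrderIso.map_bot]
    simp
  have htop : E ⊤ = x := by
    show Submodule.MapSubtype.orderEmbedding x ((Submodule.orderIsoMapComap f) ⊤) = x
    rw [OrderIso.map_top]
    exact (Submodule.map_subtype_embedding_eq x ⊤).trans (Submodule.map_subtype_top x)
  have hsurj : ∀ c, E ⊥ ≤ c → c ≤ E ⊤ → ∃ y, E y = c := by
    rw [hbot, htop]
    intro c _ hcx
    refine ⟨(Submodule.orderIsoMapComap f).symm (Submodule.comap x.subtype c), ?_⟩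
    show Submodule.MapSubtype.orderEmbedding x
      ((Submodule.orderIsoMapComap f) ((Submodule.orderIsoMapComap f).symm _)) = c
    rw [OrderIso.apply_symm_apply, Submodule.map_subtype_embedding_eq,
      Submodule.map_comap_subtype]
    exact inf_eq_right.2 hcx
  have := mu_orderEmbedding_aux E ⊥
    (Finset.Icc (⊥ : Submodule (ZMod p) (Fin n → ZMod p)) ⊤).card ⊤ le_rfl hsurj
  rw [hbot, htop] at this
  exact this

end ElemAb

section Step
open IncidenceAlgebra

variable {p : ℕ} [Fact p.Prime] {n : ℕ}

lemma card_filter_one : (Finset.univ.filter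
    (fun c : Fin (n+1) → ZMod p => c 0 = 1)).card = p ^ n := by
  haveI : NeZero p := ⟨(Fact.out : p.Prime).ne_zero⟩
  have h1 : (Finset.univ.filter (fun c : Fin (n+1) → ZMod p => c 0 = 1)).card
      = (Finset.univ : Finset (Fin n → ZMod p)).card := by
    refine Finset.card_nbij' (fun c => c ∘ Fin.succ) (fun d => Fin.cons 1 d) ?_ ?_ ?_ ?_
    · intro c _; exact Finset.mem_univ _
    · intro d _; simp
    · intro c hc
      simp only [Finset.mem_coe, Finset.mem_filter] at hc
      funext j
      refine Fin.cases ?_ (fun i => ?_) j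
      · simp [hc.2]
      · simp
    · intro d _
      funext j
      simp
  rw [h1, Finset.card_univ, Fintype.card_fun, ZMod.card, Fintype.card_fin]

lemma sum_weisner_step
    [iF1 : Fintype (Submodule (ZMod p) (Fin (n+1) → ZMod p))]
    [iD1 : DecidableEq (Submodule (ZMod p) (Fin (n+1) → ZMod p))]
    [iL1 : LocallyFiniteOrder (Submodule (ZMod p) (Fin (n+1) → ZMod p))]
    [iF2 : Fintype (Submodule (ZMod p) (Fin n → ZMod p))]
    [iD2 : DecidableEq (Submodule (ZMod p) (Fin n → ZMod p))]
    [iL2 : LocallyFiniteOrder (Submodule (ZMod p) (Fin n → ZMod p))] :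
    mu ℤ (⊥ : Submodule (ZMod p) (Fin (n+1) → ZMod p)) ⊤
      = -(p : ℤ) ^ n * mu ℤ (⊥ : Submodule (ZMod p) (Fin n → ZMod p)) ⊤ := by
  haveI : Fact (1 < p) := ⟨(Fact.out : p.Prime).one_lt⟩
  have ha : aline p n ≠ ⊥ := by
    rw [aline, Ne, Submodule.span_singleton_eq_bot]
    exact e0_ne_zero
  have hw := weisner (aline p n) ha
  set S := Finset.univ.filter
    (fun x : Submodule (ZMod p) (Fin (n+1) → ZMod p) => x ⊔ aline p n = ⊤ ∧ x ≠ ⊤) with hS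
  have hTmem : (⊤ : Submodule (ZMod p) (Fin (n+1) → ZMod p))
      ∈ Finset.univ.filter (fun x => x ⊔ aline p n = ⊤) := by simp
  rw [← Finset.sum_erase_add _ _ hTmem] at hw
  have herase : (Finset.univ.filter
      (fun x : Submodule (ZMod p) (Fin (n+1) → ZMod p) => x ⊔ aline p n = ⊤)).erase ⊤ = S := by
    ext x
    simp only [hS, Finset.mem_erase, Finset.mem_filter, Finset.mem_univ, true_and]
    tauto
  rw [herase] at hw
  have hsum : ∑ x ∈ S, mu ℤ (⊥ : Submodule (ZMod p) (Fin (n+1) → ZMod p)) x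
      = (S.card : ℤ) * mu ℤ (⊥ : Submodule (ZMod p) (Fin n → ZMod p)) ⊤ := by
    have h1 : ∀ x ∈ S, mu ℤ (⊥ : Submodule (ZMod p) (Fin (n+1) → ZMod p)) x
        = mu ℤ (⊥ : Submodule (ZMod p) (Fin n → ZMod p)) ⊤ := by
      intro x hx
      rw [hS, Finset.mem_filter] at hx
      exact mu_bot_of_mem hx.2.1 hx.2.2
    exact (Finset.sum_congr rfl h1).trans (by rw [Finset.sum_const, nsmul_eq_mul])
  have hcard : S.card = p ^ n := by
    rw [← card_filter_one (p := p) (n := n)]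
    symm
    refine Finset.card_bij (fun c _ => LinearMap.ker (fc p (n+1) c)) ?_ ?_ ?_
    · intro c hc
      rw [Finset.mem_filter] at hc
      rw [hS, Finset.mem_filter]
      exact ⟨Finset.mem_univ _, ker_fc_sup c hc.2, ker_fc_ne_top c hc.2⟩
    · intro c hc c' hc' h
      rw [Finset.mem_filter] at hc hc'
      exact fc_inj c c' hc.2 hc'.2 h
    · intro x hx
      rw [hS, Finset.mem_filter] at hx
      obtain ⟨c, hc1, hc2⟩ := surj_aux hx.2.1 hx.2.2
      exact ⟨c, Finset.mem_filter.2 ⟨Finset.mem_univ _, hc1⟩, hc2⟩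
  rw [hsum, hcard] at hw
  push_cast at hw
  linarith
end Step

noncomputable def muSub (p : ℕ) [Fact p.Prime] (n : ℕ) : ℤ :=
  letI : NeZero p := ⟨(Fact.out : p.Prime).ne_zero⟩
  letI : Finite (Submodule (ZMod p) (Fin n → ZMod p)) :=
    Finite.of_injective _ (SetLike.coe_injective (A := Submodule (ZMod p) (Fin n → ZMod p)))
  letI : Fintype (Submodule (ZMod p) (Fin n → ZMod p)) := Fintype.ofFinite _
  letI : DecidableEq (Submodule (ZMod p) (Fin n → ZMod p)) := Classical.decEq _
  letI : @DecidableRel (Submodule (ZMod p) (Fin n → ZMod p)) (Submodule (ZMod p) (Fin n → ZMod p)) (· < ·) := Classical.decRel _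
  letI : @DecidableRel (Submodule (ZMod p) (Fin n → ZMod p)) (Submodule (ZMod p) (Fin n → ZMod p)) (· ≤ ·) := Classical.decRel _
  letI := Fintype.toLocallyFiniteOrder (α := Submodule (ZMod p) (Fin n → ZMod p))
  IncidenceAlgebra.mu ℤ (⊥ : Submodule (ZMod p) (Fin n → ZMod p)) ⊤

lemma muSub_zero (p : ℕ) [Fact p.Prime] : muSub p 0 = 1 := by
  simp only [muSub]
  rw [Subsingleton.elim (⊤ : Submodule (ZMod p) (Fin 0 → ZMod p)) ⊥]
  simp

lemma mu_inst_congr {α : Type*} [PartialOrder α] (L1 L2 : LocallyFiniteOrder α)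
    (D1 D2 : DecidableEq α) (a b : α) :
    @IncidenceAlgebra.mu ℤ α _ _ _ L1 D1 a b = @IncidenceAlgebra.mu ℤ α _ _ _ L2 D2 a b := by
  obtain rfl : L1 = L2 := Subsingleton.elim _ _
  obtain rfl : D1 = D2 := Subsingleton.elim _ _
  rfl

lemma muSub_succ (p : ℕ) [Fact p.Prime] (n : ℕ) :
    muSub p (n + 1) = -(p : ℤ) ^ n * muSub p n := by
  letI : NeZero p := ⟨(Fact.out : p.Prime).ne_zero⟩
  letI : Finite (Submodule (ZMod p) (Fin (n+1) → ZMod p)) :=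
    Finite.of_injective _ (SetLike.coe_injective (A := Submodule (ZMod p) (Fin (n+1) → ZMod p)))
  letI : Finite (Submodule (ZMod p) (Fin n → ZMod p)) :=
    Finite.of_injective _ (SetLike.coe_injective (A := Submodule (ZMod p) (Fin n → ZMod p)))
  letI iF1 : Fintype (Submodule (ZMod p) (Fin (n+1) → ZMod p)) := Fintype.ofFinite _
  letI iF2 : Fintype (Submodule (ZMod p) (Fin n → ZMod p)) := Fintype.ofFinite _
  letI iD1 : DecidableEq (Submodule (ZMod p) (Fin (n+1) → ZMod p)) := Classical.decEq _
  letI iD2 : DecidableEq (Submodule (ZMod p) (Fin n → ZMod p)) := Classical.decEq _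
  letI : @DecidableRel (Submodule (ZMod p) (Fin (n+1) → ZMod p)) (Submodule (ZMod p) (Fin (n+1) → ZMod p)) (· < ·) := Classical.decRel _
  letI : @DecidableRel (Submodule (ZMod p) (Fin (n+1) → ZMod p)) (Submodule (ZMod p) (Fin (n+1) → ZMod p)) (· ≤ ·) := Classical.decRel _
  letI : @DecidableRel (Submodule (ZMod p) (Fin n → ZMod p)) (Submodule (ZMod p) (Fin n → ZMod p)) (· < ·) := Classical.decRel _
  letI : @DecidableRel (Submodule (ZMod p) (Fin n → ZMod p)) (Submodule (ZMod p) (Fin n → ZMod p)) (· ≤ ·) := Classical.decRel _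
  letI iL1 : LocallyFiniteOrder (Submodule (ZMod p) (Fin (n+1) → ZMod p)) :=
    Fintype.toLocallyFiniteOrder
  letI iL2 : LocallyFiniteOrder (Submodule (ZMod p) (Fin n → ZMod p)) :=
    Fintype.toLocallyFiniteOrder
  have h := @sum_weisner_step p _ n iF1 iD1 iL1 iF2 iD2 iL2
  have e1 : muSub p (n+1)
      = @IncidenceAlgebra.mu ℤ (Submodule (ZMod p) (Fin (n+1) → ZMod p)) _ _ _ iL1 iD1 ⊥ ⊤ := by
    simp only [muSub]
  have e2 : muSub p n
      = @IncidenceAlgebra.mu ℤ (Submodule (ZMod p) (Fin n → ZMod p)) _ _ _ iL2 iD2 ⊥ ⊤ := by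
    simp only [muSub]
  rw [e1, e2]
  exact h

lemma muSub_formula (p : ℕ) [Fact p.Prime] (n : ℕ) :
    muSub p n = (-1) ^ n * (p : ℤ) ^ (n.choose 2) := by
  induction n with
  | zero => simp [muSub_zero]
  | succ k ih =>
    rw [muSub_succ, ih]
    have hch : (k + 1).choose 2 = k + k.choose 2 := by
      rw [Nat.choose_succ_succ, Nat.choose_one_right]
    rw [hch, pow_add, pow_succ]
    ring

/-- The Möbius function of the subgroup lattice of a finite group `G`,
evaluated at a pair of subgroups. -/
noncomputable def subgroupMu (G : Type*) [Group G] [Finite G] (H K : Subgroup G) : ℤ :=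
  letI : Fintype (Subgroup G) := Fintype.ofFinite _
  letI : DecidableEq (Subgroup G) := Classical.decEq _
  letI : @DecidableRel (Subgroup G) (Subgroup G) (· < ·) := Classical.decRel _
  letI : @DecidableRel (Subgroup G) (Subgroup G) (· ≤ ·) := Classical.decRel _
  letI := Fintype.toLocallyFiniteOrder (α := Subgroup G)
  IncidenceAlgebra.mu ℤ H K

/-- The Möbius number of a finite group `G`: the value `μ(⊥, ⊤)` of the Möbius
function of its lattice of subgroups. -/
noncomputable def muGrp (G : Type*) [Group G] [Finite G] : ℤ :=
  subgroupMu G ⊥ ⊤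

/-- The Möbius number of the elementary abelian group `C_p^n` is
`(-1)^n * p^(n choose 2)`. -/
theorem muGrp_elementary_abelian (p : ℕ) [Fact p.Prime] (n : ℕ) :
    muGrp (Fin n → Multiplicative (ZMod p)) = (-1) ^ n * (p : ℤ) ^ (n.choose 2) := by
  have hkey : muGrp (Fin n → Multiplicative (ZMod p)) = muSub p n := by
    letI : NeZero p := ⟨(Fact.out : p.Prime).ne_zero⟩
    letI : Fintype (Subgroup (Fin n → Multiplicative (ZMod p))) := Fintype.ofFinite _
    letI iGD : DecidableEq (Subgroup (Fin n → Multiplicative (ZMod p))) := Classical.decEq _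
    letI : @DecidableRel (Subgroup (Fin n → Multiplicative (ZMod p))) (Subgroup (Fin n → Multiplicative (ZMod p))) (· < ·) := Classical.decRel _
    letI : @DecidableRel (Subgroup (Fin n → Multiplicative (ZMod p))) (Subgroup (Fin n → Multiplicative (ZMod p))) (· ≤ ·) := Classical.decRel _
    letI iGL := Fintype.toLocallyFiniteOrder (α := Subgroup (Fin n → Multiplicative (ZMod p)))
    letI : Finite (Submodule (ZMod p) (Fin n → ZMod p)) :=
      Finite.of_injective _ (SetLike.coe_injective (A := Submodule (ZMod p) (Fin n → ZMod p)))
    letI : Fintype (Submodule (ZMod p) (Fin n → ZMod p)) := Fintype.ofFinite _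
    letI iD : DecidableEq (Submodule (ZMod p) (Fin n → ZMod p)) := Classical.decEq _
    letI : @DecidableRel (Submodule (ZMod p) (Fin n → ZMod p)) (Submodule (ZMod p) (Fin n → ZMod p)) (· < ·) := Classical.decRel _
    letI : @DecidableRel (Submodule (ZMod p) (Fin n → ZMod p)) (Submodule (ZMod p) (Fin n → ZMod p)) (· ≤ ·) := Classical.decRel _
    letI iL := Fintype.toLocallyFiniteOrder (α := Submodule (ZMod p) (Fin n → ZMod p))
    have E : Subgroup (Fin n → Multiplicative (ZMod p)) ≃o Submodule (ZMod p) (Fin n → ZMod p) :=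
      ((MulEquiv.funMultiplicative (Fin n) (ZMod p)).symm.mapSubgroup).trans
        (Subgroup.toAddSubgroup'.trans (AddSubgroup.toZModSubmodule p))
    have h := @mu_orderIso _ _ _ _ iGL iL iGD iD E ⊥ ⊤
    rw [E.map_bot, E.map_top] at h
    simp only [muGrp, subgroupMu, muSub]
    exact h
  rw [hkey, muSub_formula]
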